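/- Fix γ > 1 and c_h ∈ ℝ. Let (ρ, v, p, B, ψ) be continuously differentiable on an open set U ⊆ ℝ_t × ℝ³ with ρ > 0 and p > 0, and suppose the conserved variables u = (ρ, ρv, E, B, ψ) satisfy pointwise the ideal GLM-MHD system with Janhunen nonconservative term and no damping: ∂ₜu + ∇·f^a(u) + φ(∇·B) = 0. Then the entropy conservation law holds pointwise on U: ∂ₜS + ∇·(vS) = 0. -/

import Mathlib

open Matrix

/-- Partial derivative in coordinate direction `i` (coordinate `0` is time `t`,
coordinates `1,2,3` are space) of a scalar function on ℝ⁴ = ℝ_t × ℝ³. -/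
noncomputable def pd (i : Fin 4) (f : (Fin 4 → ℝ) → ℝ) (x : Fin 4 → ℝ) : ℝ :=
  fderiv ℝ f x (Pi.single i 1)

/-- The spatial coordinate index corresponding to the space direction `d`. -/
def sp (d : Fin 3) : Fin 4 := ⟨d.1 + 1, by omega⟩

/-- Spatial partial derivative in direction `d`. -/
noncomputable def spd (d : Fin 3) (f : (Fin 4 → ℝ) → ℝ) (x : Fin 4 → ℝ) : ℝ :=
  pd (sp d) f x

/-- The conserved variables `u = (ρ, ρv, E, B, ψ)` with total energy
`E = p/(γ−1) + ½ρ‖v‖² + ½‖B‖² + ½ψ²`. -/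
noncomputable def consVar (γ : ℝ) (ρ p ψ : (Fin 4 → ℝ) → ℝ)
    (v B : Fin 3 → (Fin 4 → ℝ) → ℝ) (x : Fin 4 → ℝ) : Fin 9 → ℝ :=
  ![ρ x,
    ρ x * v 0 x, ρ x * v 1 x, ρ x * v 2 x,
    p x / (γ - 1) + (1/2) * ρ x * (∑ k, (v k x) ^ 2)
      + (1/2) * (∑ k, (B k x) ^ 2) + (1/2) * (ψ x) ^ 2,
    B 0 x, B 1 x, B 2 x, ψ x]

/-- The advective GLM-MHD flux `f^a_d` in spatial direction `d` with GLM wave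
speed `c_h`. -/
noncomputable def fadvP (γ c_h : ℝ) (ρ p ψ : (Fin 4 → ℝ) → ℝ)
    (v B : Fin 3 → (Fin 4 → ℝ) → ℝ) (d : Fin 3) (x : Fin 4 → ℝ) : Fin 9 → ℝ :=
  ![ρ x * v d x,
    ρ x * v 0 x * v d x + (p x + (1/2) * ∑ k, (B k x) ^ 2)
      * (if (0 : Fin 3) = d then 1 else 0) - B 0 x * B d x,
    ρ x * v 1 x * v d x + (p x + (1/2) * ∑ k, (B k x) ^ 2)
      * (if (1 : Fin 3) = d then 1 else 0) - B 1 x * B d x,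
    ρ x * v 2 x * v d x + (p x + (1/2) * ∑ k, (B k x) ^ 2)
      * (if (2 : Fin 3) = d then 1 else 0) - B 2 x * B d x,
    v d x * ((1/2) * ρ x * (∑ k, (v k x) ^ 2) + γ * p x / (γ - 1) + ∑ k, (B k x) ^ 2)
      - B d x * (∑ k, v k x * B k x) + c_h * ψ x * B d x,
    v d x * B 0 x - B d x * v 0 x + c_h * ψ x * (if d = 0 then 1 else 0),
    v d x * B 1 x - B d x * v 1 x + c_h * ψ x * (if d = 1 then 1 else 0),
    v d x * B 2 x - B d x * v 2 x + c_h * ψ x * (if d = 2 then 1 else 0),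
    c_h * B d x]

/-- The entropy function `S = −ρs/(γ−1)` with `s = log (p ρ^(−γ))`. -/
noncomputable def entSP (γ : ℝ) (ρ p : (Fin 4 → ℝ) → ℝ) (x : Fin 4 → ℝ) : ℝ :=
  -(ρ x * Real.log (p x * (ρ x) ^ (-γ))) / (γ - 1)




section toolkit
variable {f g : (Fin 4 → ℝ) → ℝ} {i : Fin 4} {x : Fin 4 → ℝ} {c : ℝ}

theorem pd_congr (h : f =ᶠ[nhds x] g) : pd i f x = pd i g x := by
  unfold pd; rw [h.fderiv_eq]

theorem pd_add (hf : DifferentiableAt ℝ f x) (hg : DifferentiableAt ℝ g x) :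
    pd i (fun y => f y + g y) x = pd i f x + pd i g x := by
  simp [pd, fderiv_fun_add hf hg]

theorem pd_sub (hf : DifferentiableAt ℝ f x) (hg : DifferentiableAt ℝ g x) :
    pd i (fun y => f y - g y) x = pd i f x - pd i g x := by
  simp [pd, fderiv_fun_sub hf hg]

theorem pd_mul (hf : DifferentiableAt ℝ f x) (hg : DifferentiableAt ℝ g x) :
    pd i (fun y => f y * g y) x = pd i f x * g x + f x * pd i g x := by
  simp [pd, fderiv_fun_mul hf hg]; ring

theorem pd_const : pd i (fun _ => c) x = 0 := by simp [pd]

theorem pd_neg : pd i (fun y => -f y) x = -pd i f x := by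
  simp [pd, fderiv_neg]

theorem pd_div_const (hf : DifferentiableAt ℝ f x) :
    pd i (fun y => f y / c) x = pd i f x / c := by
  simp only [div_eq_mul_inv]
  rw [show (fun y => f y * c⁻¹) = fun y => f y * (fun _ : Fin 4 → ℝ => c⁻¹) y from rfl,
    pd_mul hf (differentiableAt_const _)]
  simp [pd_const]

theorem pd_sq (hf : DifferentiableAt ℝ f x) :
    pd i (fun y => f y ^ 2) x = 2 * f x * pd i f x := by
  have h : (fun y => f y ^ 2) = fun y => f y * f y := by ext y; ring
  rw [h, pd_mul hf hf]; ring

theorem pd_log (hf : DifferentiableAt ℝ f x) (h0 : f x ≠ 0) :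
    pd i (fun y => Real.log (f y)) x = pd i f x / f x := by
  unfold pd
  rw [(hf.hasFDerivAt.log h0).fderiv]
  simp [div_eq_inv_mul]

end toolkit


section vecHelpers
variable {α : Type*} (a0 a1 a2 a3 a4 a5 a6 a7 a8 : α)
theorem vec9_five : (![a0,a1,a2,a3,a4,a5,a6,a7,a8] : Fin 9 → α) 5 = a5 := rfl
theorem vec9_six : (![a0,a1,a2,a3,a4,a5,a6,a7,a8] : Fin 9 → α) 6 = a6 := rfl
theorem vec9_seven : (![a0,a1,a2,a3,a4,a5,a6,a7,a8] : Fin 9 → α) 7 = a7 := rfl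
theorem vec9_eight : (![a0,a1,a2,a3,a4,a5,a6,a7,a8] : Fin 9 → α) 8 = a8 := rfl
end vecHelpers

set_option maxHeartbeats 4000000 in
/-- **Pointwise entropy conservation for the ideal GLM-MHD equations.**
If `∂ₜu + ∇·f^a + φ(∇·B) = 0` holds pointwise (with `φ` the Janhunen vector and no
damping) for a C¹ solution with `ρ, p > 0`, then the entropy conservation law
`∂ₜS + ∇·(vS) = 0` holds pointwise. -/
theorem ideal_glm_mhd_entropy_conservation
    (γ c_h : ℝ) (hγ : 1 < γ)
    (U : Set (Fin 4 → ℝ)) (hU : IsOpen U)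
    (ρ p ψ : (Fin 4 → ℝ) → ℝ) (v B : Fin 3 → (Fin 4 → ℝ) → ℝ)
    (hρreg : ContDiffOn ℝ 1 ρ U) (hpreg : ContDiffOn ℝ 1 p U)
    (hψreg : ContDiffOn ℝ 1 ψ U)
    (hvreg : ∀ k, ContDiffOn ℝ 1 (v k) U) (hBreg : ∀ k, ContDiffOn ℝ 1 (B k) U)
    (hpos : ∀ x ∈ U, 0 < ρ x ∧ 0 < p x)
    (hPDE : ∀ x ∈ U, ∀ a : Fin 9,
      pd 0 (fun y => consVar γ ρ p ψ v B y a) x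
        + (∑ d, spd d (fun y => fadvP γ c_h ρ p ψ v B d y a) x)
        + (![0, 0, 0, 0, 0, v 0 x, v 1 x, v 2 x, 0] : Fin 9 → ℝ) a
            * (∑ d, spd d (B d) x)
      = 0) :
    ∀ x ∈ U,
      pd 0 (entSP γ ρ p) x
        + (∑ d, spd d (fun y => v d y * entSP γ ρ p y) x) = 0 := by

  intro x hx
  have hUx : U ∈ nhds x := hU.mem_nhds hx
  obtain ⟨hρx, hpx⟩ := hpos x hx
  have hρ0 : ρ x ≠ 0 := ne_of_gt hρx
  have hp0 : p x ≠ 0 := ne_of_gt hpx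
  have hγ0 : γ - 1 ≠ 0 := by linarith
  have dρ : DifferentiableAt ℝ ρ x := ((hρreg.differentiableOn one_ne_zero) x hx).differentiableAt hUx
  have dp : DifferentiableAt ℝ p x := ((hpreg.differentiableOn one_ne_zero) x hx).differentiableAt hUx
  have dψ : DifferentiableAt ℝ ψ x := ((hψreg.differentiableOn one_ne_zero) x hx).differentiableAt hUx
  have dv : ∀ k, DifferentiableAt ℝ (v k) x := fun k =>
    (((hvreg k).differentiableOn one_ne_zero) x hx).differentiableAt hUx
  have dB : ∀ k, DifferentiableAt ℝ (B k) x := fun k =>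
    (((hBreg k).differentiableOn one_ne_zero) x hx).differentiableAt hUx
  have dv0 := dv 0; have dv1 := dv 1; have dv2 := dv 2
  have dB0 := dB 0; have dB1 := dB 1; have dB2 := dB 2
  have dlogp : DifferentiableAt ℝ (fun y => Real.log (p y)) x := dp.log hp0
  have dlogρ : DifferentiableAt ℝ (fun y => Real.log (ρ y)) x := dρ.log hρ0
  -- rewrite the entropy using positivity
  have hEq : entSP γ ρ p =ᶠ[nhds x]
      fun y => -(ρ y * (Real.log (p y) - γ * Real.log (ρ y))) / (γ - 1) := by
    filter_upwards [hUx] with y hy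
    obtain ⟨h1, h2⟩ := hpos y hy
    unfold entSP
    rw [Real.log_mul (ne_of_gt h2) (Real.rpow_pos_of_pos h1 _).ne', Real.log_rpow h1]
    ring
  have hEqd : ∀ d : Fin 3, (fun y => v d y * entSP γ ρ p y) =ᶠ[nhds x]
      fun y => v d y * (-(ρ y * (Real.log (p y) - γ * Real.log (ρ y))) / (γ - 1)) :=
    fun d => hEq.mono fun y hy => by dsimp only at hy ⊢; rw [hy]
  have h0 := hPDE x hx 0
  have h1 := hPDE x hx 1
  have h2 := hPDE x hx 2
  have h3 := hPDE x hx 3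
  have h4 := hPDE x hx 4
  have h5 := hPDE x hx 5
  have h6 := hPDE x hx 6
  have h7 := hPDE x hx 7
  have h8 := hPDE x hx 8
  rw [Fin.sum_univ_three]
  simp only [spd]
  rw [pd_congr hEq, pd_congr (hEqd 0), pd_congr (hEqd 1), pd_congr (hEqd 2)]
  simp [consVar, fadvP, spd, Fin.sum_univ_three, vec9_five, vec9_six, vec9_seven, vec9_eight] at h0 h1 h2 h3 h4 h5 h6 h7 h8
  simp (disch := first | assumption | fun_prop) only
    [pd_add, pd_sub, pd_mul, pd_const, pd_neg, pd_div_const, pd_sq, pd_log] at h0 h1 h2 h3 h4 h5 h6 h7 h8 ⊢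
  -- mass equation
  have hM : pd 0 ρ x + (v 0 x * pd (sp 0) ρ x + v 1 x * pd (sp 1) ρ x + v 2 x * pd (sp 2) ρ x)
      + ρ x * (pd (sp 0) (v 0) x + pd (sp 1) (v 1) x + pd (sp 2) (v 2) x) = 0 := by
    linear_combination h0
  -- pressure equation
  have hinv : (γ - 1) * (γ - 1)⁻¹ = 1 := mul_inv_cancel₀ hγ0
  have hpinv : p x * (p x)⁻¹ = 1 := mul_inv_cancel₀ hp0
  have hρinv : ρ x * (ρ x)⁻¹ = 1 := mul_inv_cancel₀ hρ0
  have hPdiv : (pd 0 p x + (v 0 x * pd (sp 0) p x + v 1 x * pd (sp 1) p x + v 2 x * pd (sp 2) p x)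
      + γ * p x * (pd (sp 0) (v 0) x + pd (sp 1) (v 1) x + pd (sp 2) (v 2) x)) / (γ - 1) = 0 := by
    linear_combination h4 - v 0 x * h1 - v 1 x * h2 - v 2 x * h3
      + ((v 0 x ^ 2 + v 1 x ^ 2 + v 2 x ^ 2)/2) * h0 - B 0 x * h5
      - B 1 x * h6 - B 2 x * h7 - ψ x * h8
      - (v 0 x * pd (sp 0) p x + v 1 x * pd (sp 1) p x + v 2 x * pd (sp 2) p x) * hinv
  have hP : pd 0 p x + (v 0 x * pd (sp 0) p x + v 1 x * pd (sp 1) p x + v 2 x * pd (sp 2) p x)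
      + γ * p x * (pd (sp 0) (v 0) x + pd (sp 1) (v 1) x + pd (sp 2) (v 2) x) = 0 := by
    rcases div_eq_zero_iff.mp hPdiv with h | h
    · exact h
    · exact absurd h hγ0
  linear_combination
    (-(γ-1)⁻¹ * ((Real.log (p x) - γ * Real.log (ρ x)) - γ * ρ x * (ρ x)⁻¹)) * hM
    - ((γ-1)⁻¹ * (p x)⁻¹ * ρ x) * hP
    + ((γ-1)⁻¹ * γ * ρ x * (pd (sp 0) (v 0) x + pd (sp 1) (v 1) x + pd (sp 2) (v 2) x)) * hpinv
    - ((γ-1)⁻¹ * γ * ρ x * (pd (sp 0) (v 0) x + pd (sp 1) (v 1) x + pd (sp 2) (v 2) x)) * hρinv
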